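/- Let S be a finite nonempty linearly ordered set, U uniformly distributed on [0,1], and g₁, ..., g_k : [0,1] → S monotone nondecreasing measurable functions (k ≥ 1). Then for any x₁, ..., x_k ∈ S, P(g₁(U) = x₁ ∧ ... ∧ g_k(U) = x_k) = max(0, min_{i} P(g_i(U) ≤ x_i) − max_{i} P(g_i(U) < x_i)). -/

import Mathlib

open MeasureTheory Set

theorem stmt_4 (S : Type*) [Fintype S] [Nonempty S] [LinearOrder S]
    [MeasurableSpace S] (k : ℕ) (hk : 0 < k) (g : Fin k → ℝ → S)
    (hg : ∀ i, MonotoneOn (g i) (Icc (0:ℝ) 1))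
    (hgm : ∀ i, Measurable (g i)) (x : Fin k → S) :
    (volume.restrict (Icc (0:ℝ) 1)) {u | ∀ i, g i u = x i} =
      (⨅ i, (volume.restrict (Icc (0:ℝ) 1)) {u | g i u ≤ x i})
        - (⨆ i, (volume.restrict (Icc (0:ℝ) 1)) {u | g i u < x i}) := by
  haveI : NeZero k := ⟨hk.ne'⟩
  classical
  set I : Set ℝ := Icc (0:ℝ) 1 with hI
  set A : Fin k → Set ℝ := fun i => {u | g i u ≤ x i} ∩ I with hA
  set B : Fin k → Set ℝ := fun i => {u | g i u < x i} ∩ I with hB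
  -- down-closed within I
  have downA : ∀ i, ∀ u ∈ I, ∀ v ∈ A i, u ≤ v → u ∈ A i := by
    intro i u hu v hv huv
    exact ⟨le_trans (hg i hu hv.2 huv) hv.1, hu⟩
  have downB : ∀ i, ∀ u ∈ I, ∀ v ∈ B i, u ≤ v → u ∈ B i := by
    intro i u hu v hv huv
    exact ⟨lt_of_le_of_lt (hg i hu hv.2 huv) hv.1, hu⟩
  -- comparability of down-sets
  have cmp : ∀ P Q : Set ℝ, P ⊆ I → Q ⊆ I →
      (∀ u ∈ I, ∀ v ∈ P, u ≤ v → u ∈ P) →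
      (∀ u ∈ I, ∀ v ∈ Q, u ≤ v → u ∈ Q) → P ⊆ Q ∨ Q ⊆ P := by
    intro P Q hPI hQI hP hQ
    by_cases h : P ⊆ Q
    · exact Or.inl h
    · right
      obtain ⟨v, hvP, hvQ⟩ := not_subset.1 h
      intro u hu
      rcases le_total u v with h1 | h1
      · exact hP u (hQI hu) v hvP h1
      · exact absurd (hQ v (hPI hvP) u hu h1) hvQ
  have cmpAB : ∀ i j, A i ⊆ B j ∨ B j ⊆ A i :=
    fun i j => cmp (A i) (B j) inter_subset_right inter_subset_right (downA i) (downB j)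
  -- minimum of A's
  have hAmin : ∃ j, ∀ i, A j ⊆ A i := by
    obtain ⟨m, hm, hmin⟩ := Finset.exists_minimal (s := Finset.univ.image A)
      ⟨A ⟨0, hk⟩, Finset.mem_image_of_mem _ (Finset.mem_univ _)⟩
    replace hmin : ∀ y ∈ Finset.univ.image A, ¬ y < m :=
      fun y hy hlt => not_le_of_gt hlt (hmin hy hlt.le)
    obtain ⟨j, -, rfl⟩ := Finset.mem_image.1 hm
    refine ⟨j, fun i => ?_⟩
    rcases cmp (A j) (A i) inter_subset_right inter_subset_right (downA j) (downA i) with h | h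
    · exact h
    · have := hmin (A i) (Finset.mem_image_of_mem _ (Finset.mem_univ _))
      have : A i = A j := by
        by_contra hne
        exact this (lt_of_le_of_ne h hne)
      exact this ▸ subset_rfl
  have hBmax : ∃ j, ∀ i, B i ⊆ B j := by
    obtain ⟨m, hm, hmax⟩ := Finset.exists_maximal (s := Finset.univ.image B)
      ⟨B ⟨0, hk⟩, Finset.mem_image_of_mem _ (Finset.mem_univ _)⟩
    replace hmax : ∀ y ∈ Finset.univ.image B, ¬ m < y :=
      fun y hy hlt => not_le_of_gt hlt (hmax hy hlt.le)
    obtain ⟨j, -, rfl⟩ := Finset.mem_image.1 hm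
    refine ⟨j, fun i => ?_⟩
    rcases cmp (B j) (B i) inter_subset_right inter_subset_right (downB j) (downB i) with h | h
    · have := hmax (B i) (Finset.mem_image_of_mem _ (Finset.mem_univ _))
      have : B i = B j := by
        by_contra hne
        exact this (lt_of_le_of_ne h (Ne.symm hne))
      exact this ▸ subset_rfl
    · exact h
  obtain ⟨j0, hj0⟩ := hAmin
  obtain ⟨j1, hj1⟩ := hBmax
  -- measurability via OrdConnected
  have ordA : ∀ i, (A i).OrdConnected := by
    intro i
    refine ⟨fun u hu v hv w hw => ?_⟩
    have hwI : w ∈ I := ⟨le_trans hu.2.1 hw.1, le_trans hw.2 hv.2.2⟩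
    exact downA i w hwI v hv hw.2
  have ordB : ∀ i, (B i).OrdConnected := by
    intro i
    refine ⟨fun u hu v hv w hw => ?_⟩
    have hwI : w ∈ I := ⟨le_trans hu.2.1 hw.1, le_trans hw.2 hv.2.2⟩
    exact downB i w hwI v hv hw.2
  -- rewrite restricted measures
  have hres : ∀ t : Set ℝ, (volume.restrict I) t = volume (t ∩ I) :=
    fun t => Measure.restrict_apply' measurableSet_Icc
  have hinf : (⨅ i, (volume.restrict I) {u | g i u ≤ x i}) = volume (A j0) := by
    refine le_antisymm ?_ ?_
    · refine le_trans (iInf_le _ j0) ?_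
      rw [hres]
    · refine le_iInf fun i => ?_
      rw [hres]
      exact measure_mono (hj0 i)
  have hsup : (⨆ i, (volume.restrict I) {u | g i u < x i}) = volume (B j1) := by
    refine le_antisymm ?_ ?_
    · refine iSup_le fun i => ?_
      rw [hres]
      exact measure_mono (hj1 i)
    · refine le_trans ?_ (le_iSup _ j1)
      rw [hres]
  have hE : {u | ∀ i, g i u = x i} ∩ I = A j0 \ B j1 := by
    ext u
    constructor
    · rintro ⟨hu, huI⟩
      refine ⟨⟨(hu j0).le, huI⟩, fun hB1 => ?_⟩
      exact absurd hB1.1 (by simp [hu j1])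
    · rintro ⟨huA, huB⟩
      have huI : u ∈ I := huA.2
      refine ⟨fun i => ?_, huI⟩
      have hle : g i u ≤ x i := (hj0 i huA).1
      have hnlt : ¬ g i u < x i := fun h => huB (hj1 i ⟨h, huI⟩)
      exact le_antisymm hle (not_lt.1 hnlt)
  rw [hres, hE, hinf, hsup]
  rcases cmpAB j0 j1 with h | h
  · -- A j0 ⊆ B j1 : LHS empty, RHS zero
    rw [diff_eq_empty.2 h, measure_empty]
    exact (tsub_eq_zero_of_le (measure_mono h)).symm
  · -- B j1 ⊆ A j0
    have hfin : volume (B j1) ≠ ⊤ := by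
      refine ne_of_lt (lt_of_le_of_lt (measure_mono inter_subset_right) ?_)
      simp [hI, Real.volume_Icc]
    exact measure_diff h (ordB j1).measurableSet.nullMeasurableSet hfin
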